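/- Let a : ℝ³ → ℝ³ be a C², 2π-periodic, divergence-free vector field (Σⱼ ∂ⱼaⱼ = 0), let w : ℝ³ → ℝ³ be C³ and 2π-periodic, and fix a coordinate direction k ∈ {1,2,3}. Then ∫_Q ((a·∇)w)·(∂ₖ∂ₖw) dx = ∫_Q (((∂ₖa)·∇)(∂ₖw))·w dx, where Q = [0,2π]³ and ∂ₖ denotes the partial derivative in the k-th coordinate. -/

import Mathlib

open Set Real MeasureTheory

/-- Spatial partial derivative `∂ᵢ f` of a scalar function on `ℝ³`. -/
noncomputable def pd (i : Fin 3) (f : (Fin 3 → ℝ) → ℝ) (x : Fin 3 → ℝ) : ℝ :=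
  fderiv ℝ f x (Pi.single i 1)

lemma contDiff_pd {n m : WithTop ℕ∞} {f : (Fin 3 → ℝ) → ℝ} (hf : ContDiff ℝ n f)
    (hmn : m + 1 ≤ n) (i : Fin 3) : ContDiff ℝ m (pd i f) :=
  (hf.fderiv_right hmn).clm_apply contDiff_const

lemma pd_const (i : Fin 3) (c : ℝ) (x : Fin 3 → ℝ) : pd i (fun _ => c) x = 0 := by
  unfold pd
  rw [fderiv_fun_const]
  simp

lemma pd_add {f g : (Fin 3 → ℝ) → ℝ} {x : Fin 3 → ℝ} (i : Fin 3)
    (hf : DifferentiableAt ℝ f x) (hg : DifferentiableAt ℝ g x) :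
    pd i (fun y => f y + g y) x = pd i f x + pd i g x := by
  unfold pd
  rw [fderiv_fun_add hf hg]
  simp

lemma pd_const_mul {f : (Fin 3 → ℝ) → ℝ} {x : Fin 3 → ℝ} (i : Fin 3) (c : ℝ)
    (hf : DifferentiableAt ℝ f x) :
    pd i (fun y => c * f y) x = c * pd i f x := by
  unfold pd
  rw [fderiv_const_mul hf]
  simp

lemma pd_mul {f g : (Fin 3 → ℝ) → ℝ} {x : Fin 3 → ℝ} (i : Fin 3)
    (hf : DifferentiableAt ℝ f x) (hg : DifferentiableAt ℝ g x) :
    pd i (fun y => f y * g y) x = pd i f x * g x + f x * pd i g x := by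
  unfold pd
  rw [fderiv_fun_mul hf hg]
  simp only [ContinuousLinearMap.add_apply, ContinuousLinearMap.smul_apply, smul_eq_mul]
  ring

lemma pd_sum {ι : Type*} (s : Finset ι) {F : ι → (Fin 3 → ℝ) → ℝ} {x : Fin 3 → ℝ} (i : Fin 3)
    (h : ∀ j ∈ s, DifferentiableAt ℝ (F j) x) :
    pd i (fun y => ∑ j ∈ s, F j y) x = ∑ j ∈ s, pd i (F j) x := by
  unfold pd
  rw [fderiv_fun_sum h]
  simp

lemma fderiv_shift {f : (Fin 3 → ℝ) → ℝ} (hf : Differentiable ℝ f) (c : Fin 3 → ℝ)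
    (hper : ∀ y, f (y + c) = f y) (x : Fin 3 → ℝ) :
    fderiv ℝ f (x + c) = fderiv ℝ f x := by
  have h1 : HasFDerivAt (fun y : Fin 3 → ℝ => y + c)
      (ContinuousLinearMap.id ℝ (Fin 3 → ℝ)) x := (hasFDerivAt_id x).add_const c
  have h3 : HasFDerivAt (fun y => f (y + c))
      ((fderiv ℝ f (x + c)).comp (ContinuousLinearMap.id ℝ (Fin 3 → ℝ))) x :=
    (hf (x + c)).hasFDerivAt.comp x h1
  rw [ContinuousLinearMap.comp_id, show (fun y => f (y + c)) = f from funext hper] at h3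
  exact (h3.fderiv).symm

lemma pd_shift {f : (Fin 3 → ℝ) → ℝ} (hf : Differentiable ℝ f) (c : Fin 3 → ℝ)
    (hper : ∀ y, f (y + c) = f y) (x : Fin 3 → ℝ) (i : Fin 3) :
    pd i f (x + c) = pd i f x := by
  unfold pd; rw [fderiv_shift hf c hper]

lemma pd_comm {f : (Fin 3 → ℝ) → ℝ} (hf : ContDiff ℝ 2 f) (i j : Fin 3) (x : Fin 3 → ℝ) :
    pd i (pd j f) x = pd j (pd i f) x := by
  have hd : DifferentiableAt ℝ (fderiv ℝ f) x :=
    ((hf.fderiv_right (by norm_num : (1:WithTop ℕ∞)+1 ≤ 2)).differentiable one_ne_zero).differentiableAt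
  have hsymm := hf.contDiffAt.isSymmSndFDerivAt (by norm_num) (x := x)
  unfold pd
  rw [fderiv_clm_apply hd (differentiableAt_const _),
      fderiv_clm_apply hd (differentiableAt_const _)]
  simp only [fderiv_fun_const, Pi.zero_apply, ContinuousLinearMap.add_apply,
    ContinuousLinearMap.comp_zero, ContinuousLinearMap.zero_apply, add_zero,
    ContinuousLinearMap.flip_apply]
  rw [zero_add, zero_add]
  exact hsymm _ _

lemma integral_pd_eq_zero {g : (Fin 3 → ℝ) → ℝ} (hg : ContDiff ℝ 1 g)
    (hper : ∀ x (j : Fin 3), g (x + Pi.single j (2 * Real.pi)) = g x) (j : Fin 3) :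
    ∫ x in Set.Icc (0 : Fin 3 → ℝ) (fun _ => 2 * Real.pi), pd j g x = 0 := by
  classical
  set b : Fin 3 → ℝ := fun _ => 2 * Real.pi with hb
  have hle : (0 : Fin 3 → ℝ) ≤ b := fun i => by positivity
  set f : (Fin 3 → ℝ) → Fin 3 → ℝ := fun x i => if i = j then g x else 0 with hf
  set f' : (Fin 3 → ℝ) → (Fin 3 → ℝ) →L[ℝ] (Fin 3 → ℝ) :=
    fun x => ContinuousLinearMap.pi (fun i => if i = j then fderiv ℝ g x else 0) with hf'
  have hgd : Differentiable ℝ g := hg.differentiable one_ne_zero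
  have hsum : ∀ x, (∑ i : Fin 3, f' x (Pi.single i 1) i) = pd j g x := by
    intro x
    have : ∀ i : Fin 3, f' x (Pi.single i 1) i
        = if i = j then fderiv ℝ g x (Pi.single i 1) else 0 := by
      intro i
      simp only [hf', ContinuousLinearMap.pi_apply]
      split_ifs <;> simp
    simp only [this]
    rw [Finset.sum_ite_eq' Finset.univ j (fun i => fderiv ℝ g x (Pi.single i 1))]
    simp [pd]
  have Hc : ContinuousOn f (Set.Icc 0 b) := by
    apply Continuous.continuousOn
    refine continuous_pi fun i => ?_
    by_cases h : i = j
    · simp only [hf, h, if_true]; exact hg.continuous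
    · simp only [hf, if_neg h]; exact continuous_const
  have Hd : ∀ x ∈ (Set.pi univ fun i => Ioo ((0 : Fin 3 → ℝ) i) (b i)) \ (∅ : Set (Fin 3 → ℝ)),
      HasFDerivAt f (f' x) x := by
    intro x _
    refine hasFDerivAt_pi.2 fun i => ?_
    by_cases h : i = j
    · subst h
      simpa using (hgd x).hasFDerivAt
    · simpa [hf, hf', if_neg h] using hasFDerivAt_const (0:ℝ) x
  have Hi : IntegrableOn (fun x => ∑ i : Fin 3, f' x (Pi.single i 1) i) (Set.Icc 0 b) := by
    rw [funext hsum]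
    exact ((contDiff_pd (m := 0) hg (by norm_num) j).continuous).integrableOn_Icc
  have key := MeasureTheory.integral_divergence_of_hasFDerivAt_off_countable
    (n := 2) (a := (0 : Fin 3 → ℝ)) (b := b) hle f f' ∅ Set.countable_empty Hc Hd Hi
  rw [funext hsum] at key
  rw [key]
  apply Finset.sum_eq_zero
  intro i _
  by_cases h : i = j
  · subst h
    have hins : ∀ x : Fin 2 → ℝ, (Fin.insertNth (α := fun _ : Fin 3 => ℝ) i (b i) x)
        = Fin.insertNth (α := fun _ : Fin 3 => ℝ) i ((0 : Fin 3 → ℝ) i) x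
          + Pi.single i (2 * Real.pi) := by
      intro x; funext m
      rcases eq_or_ne m i with rfl | hm
      · simp [Fin.insertNth_apply_same, hb]
      · obtain ⟨l, rfl⟩ := Fin.exists_succAbove_eq hm
        simp [Fin.insertNth_apply_succAbove, Pi.single_eq_of_ne (Fin.succAbove_ne i l)]
    have heq : ∀ x : Fin 2 → ℝ, f (Fin.insertNth (α := fun _ : Fin 3 => ℝ) i (b i) x) i
        = f (Fin.insertNth (α := fun _ : Fin 3 => ℝ) i ((0 : Fin 3 → ℝ) i) x) i := by
      intro x
      simp only [hf, if_pos rfl, hins x, hper]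
    simp only [heq, sub_self]
  · have hzero : ∀ c : ℝ, ∀ x : Fin 2 → ℝ,
        f (Fin.insertNth (α := fun _ : Fin 3 => ℝ) i c x) i = 0 := by
      intro c x; simp [hf, h]
    simp only [hzero, integral_zero, sub_self]

/-- Integration-by-parts identity used for the `H¹` estimate: for a C²
periodic divergence-free `a` and a C³ periodic `w`,
`∫_Q ((a·∇)w)·(∂ₖ∂ₖw) = ∫_Q (((∂ₖa)·∇)(∂ₖw))·w`. -/
theorem advection_second_derivative_identity
    (a w : (Fin 3 → ℝ) → Fin 3 → ℝ) (k : Fin 3)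
    (ha : ContDiff ℝ 2 a) (hw : ContDiff ℝ 3 w)
    (ha_per : ∀ x, ∀ j : Fin 3, a (x + Pi.single j (2 * Real.pi)) = a x)
    (hw_per : ∀ x, ∀ j : Fin 3, w (x + Pi.single j (2 * Real.pi)) = w x)
    (ha_div : ∀ x, ∑ j : Fin 3, pd j (fun y => a y j) x = 0) :
    (∫ x in Set.univ.pi fun _ : Fin 3 => Set.Icc (0 : ℝ) (2 * Real.pi),
        ∑ i : Fin 3, (∑ j : Fin 3, a x j * pd j (fun y => w y i) x)
          * pd k (fun y => pd k (fun z => w z i) y) x)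
      = ∫ x in Set.univ.pi fun _ : Fin 3 => Set.Icc (0 : ℝ) (2 * Real.pi),
          ∑ i : Fin 3,
            (∑ j : Fin 3, pd k (fun y => a y j) x
              * pd j (fun y => pd k (fun z => w z i) y) x) * w x i := by
  classical
  have hQ : (Set.univ.pi fun _ : Fin 3 => Set.Icc (0 : ℝ) (2 * Real.pi))
      = Set.Icc (0 : Fin 3 → ℝ) (fun _ => 2 * Real.pi) := by
    rw [← Set.pi_univ_Icc]
    rfl
  have heta : ∀ (i : Fin 3) (g : (Fin 3 → ℝ) → ℝ), (fun y => pd i g y) = pd i g :=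
    fun _ _ => rfl
  rw [hQ]
  simp only [heta]
  -- smoothness of components
  have hwi : ∀ i : Fin 3, ContDiff ℝ 3 (fun z => w z i) :=
    fun i => (ContinuousLinearMap.proj i : (Fin 3 → ℝ) →L[ℝ] ℝ).contDiff.comp hw
  have haj : ∀ j : Fin 3, ContDiff ℝ 2 (fun z => a z j) :=
    fun j => (ContinuousLinearMap.proj j : (Fin 3 → ℝ) →L[ℝ] ℝ).contDiff.comp ha
  have hpdw : ∀ (j i : Fin 3), ContDiff ℝ 2 (pd j (fun z => w z i)) :=
    fun j i => contDiff_pd (hwi i) (by norm_num) j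
  have hpdw1 : ∀ (l j i : Fin 3), ContDiff ℝ 1 (pd l (pd j (fun z => w z i))) :=
    fun l j i => contDiff_pd (hpdw j i) (by norm_num) l
  have hpda : ∀ (l j : Fin 3), ContDiff ℝ 1 (pd l (fun z => a z j)) :=
    fun l j => contDiff_pd (haj j) (by norm_num) l
  have Hw : ∀ i : Fin 3, Differentiable ℝ (fun z => w z i) :=
    fun i => (hwi i).differentiable (by norm_num)
  have Ha : ∀ j : Fin 3, Differentiable ℝ (fun z => a z j) :=
    fun j => (haj j).differentiable (by norm_num)
  have Hpdw : ∀ (j i : Fin 3), Differentiable ℝ (pd j (fun z => w z i)) :=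
    fun j i => (hpdw j i).differentiable (by norm_num)
  have Hpdw1 : ∀ (l j i : Fin 3), Differentiable ℝ (pd l (pd j (fun z => w z i))) :=
    fun l j i => (hpdw1 l j i).differentiable one_ne_zero
  have Hpda : ∀ (l j : Fin 3), Differentiable ℝ (pd l (fun z => a z j)) :=
    fun l j => (hpda l j).differentiable one_ne_zero
  -- periodicity of components
  have Pw : ∀ (x : Fin 3 → ℝ) (m i : Fin 3),
      w (x + Pi.single m (2 * Real.pi)) i = w x i := fun x m i => congrFun (hw_per x m) i
  have Pa : ∀ (x : Fin 3 → ℝ) (m j : Fin 3),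
      a (x + Pi.single m (2 * Real.pi)) j = a x j := fun x m j => congrFun (ha_per x m) j
  have Ppdw : ∀ (j i : Fin 3) (x : Fin 3 → ℝ) (m : Fin 3),
      pd j (fun z => w z i) (x + Pi.single m (2 * Real.pi)) = pd j (fun z => w z i) x :=
    fun j i x m => pd_shift (Hw i) _ (fun y => congrFun (hw_per y m) i) x j
  have Ppda : ∀ (l j : Fin 3) (x : Fin 3 → ℝ) (m : Fin 3),
      pd l (fun z => a z j) (x + Pi.single m (2 * Real.pi)) = pd l (fun z => a z j) x :=
    fun l j x m => pd_shift (Ha j) _ (fun y => congrFun (ha_per y m) j) x l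
  -- auxiliary functions
  set F : (Fin 3 → ℝ) → ℝ := fun y => ∑ i : Fin 3,
    (∑ j : Fin 3, a y j * pd j (fun z => w z i) y) * pd k (fun z => w z i) y with hF
  set P : Fin 3 → (Fin 3 → ℝ) → ℝ := fun j y =>
    (1/2) * (a y j * ∑ i : Fin 3, pd k (fun z => w z i) y * pd k (fun z => w z i) y)
      + pd k (fun z => a z j) y * ∑ i : Fin 3, pd k (fun z => w z i) y * w y i with hP
  have hFc : ContDiff ℝ 1 F := by
    rw [hF]
    exact ContDiff.sum fun i _ =>
      (ContDiff.sum fun j _ =>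
        ((haj j).of_le one_le_two).mul ((hpdw j i).of_le one_le_two)).mul
        ((hpdw k i).of_le one_le_two)
  have hPc : ∀ j, ContDiff ℝ 1 (P j) := by
    intro j
    simp only [hP]
    exact (contDiff_const.mul (((haj j).of_le one_le_two).mul
        (ContDiff.sum fun i _ =>
          ((hpdw k i).of_le one_le_two).mul ((hpdw k i).of_le one_le_two)))).add
      ((hpda k j).mul (ContDiff.sum fun i _ =>
        ((hpdw k i).of_le one_le_two).mul ((hwi i).of_le (by norm_num))))
  have hFper : ∀ (x : Fin 3 → ℝ) (m : Fin 3), F (x + Pi.single m (2 * Real.pi)) = F x := by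
    intro x m
    simp only [hF, Pa, Pw, Ppdw]
  have hPper : ∀ (j : Fin 3) (x : Fin 3 → ℝ) (m : Fin 3),
      P j (x + Pi.single m (2 * Real.pi)) = P j x := by
    intro j x m
    simp only [hP, Pa, Pw, Ppdw, Ppda]
  -- second divergence identity
  have hdivka : ∀ x, ∑ j : Fin 3, pd j (pd k (fun z => a z j)) x = 0 := by
    intro x
    have e1 : ∀ j : Fin 3, pd j (pd k (fun z => a z j)) x
        = pd k (pd j (fun z => a z j)) x := fun j => pd_comm (haj j) j k x
    simp only [e1]
    rw [← pd_sum Finset.univ k (fun j _ => (Hpda j j).differentiableAt),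
      show (fun y => ∑ j : Fin 3, pd j (fun z => a z j) y) = fun _ => (0:ℝ) from
        funext ha_div, pd_const]
  -- Schwarz for w
  have hsw : ∀ (j i : Fin 3) (x : Fin 3 → ℝ),
      pd k (pd j (fun z => w z i)) x = pd j (pd k (fun z => w z i)) x :=
    fun j i x => pd_comm ((hwi i).of_le (by norm_num)) k j x
  -- key pointwise identity
  have key : ∀ x : Fin 3 → ℝ,
      (∑ i : Fin 3, (∑ j : Fin 3, a x j * pd j (fun y => w y i) x)
          * pd k (pd k (fun z => w z i)) x)
      = (∑ i : Fin 3, (∑ j : Fin 3, pd k (fun y => a y j) x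
              * pd j (pd k (fun z => w z i)) x) * w x i)
        + (pd k F x - ∑ j : Fin 3, pd j (P j) x) := by
    intro x
    have d1 := ha_div x
    have d2 := hdivka x
    simp only [hF, hP]
    simp (disch := fun_prop) only [pd_sum, pd_mul, pd_add, pd_const_mul, pd_const]
    simp only [hsw]
    simp only [Fin.sum_univ_three] at d1 d2 ⊢
    linear_combination
      ((1/2) * (pd k (fun z => w z 0) x * pd k (fun z => w z 0) x
        + pd k (fun z => w z 1) x * pd k (fun z => w z 1) x
        + pd k (fun z => w z 2) x * pd k (fun z => w z 2) x)) * d1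
      + (pd k (fun z => w z 0) x * w x 0 + pd k (fun z => w z 1) x * w x 1
        + pd k (fun z => w z 2) x * w x 2) * d2
  -- integrability
  have hCw : Continuous w := hw.continuous
  have hCwi : ∀ i : Fin 3, Continuous (fun z => w z i) := fun i => (hwi i).continuous
  have hCpdw1 : ∀ (l j i : Fin 3), Continuous (pd l (pd j (fun z => w z i))) :=
    fun l j i => (hpdw1 l j i).continuous
  have hCpda : ∀ (l j : Fin 3), Continuous (pd l (fun z => a z j)) :=
    fun l j => (hpda l j).continuous
  have hintS2 : IntegrableOn (fun x => ∑ i : Fin 3,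
      (∑ j : Fin 3, pd k (fun y => a y j) x
        * pd j (pd k (fun z => w z i)) x) * w x i)
      (Set.Icc (0 : Fin 3 → ℝ) (fun _ => 2 * Real.pi)) := by
    apply Continuous.integrableOn_Icc
    fun_prop
  have hintF : IntegrableOn (fun x => pd k F x)
      (Set.Icc (0 : Fin 3 → ℝ) (fun _ => 2 * Real.pi)) :=
    ((contDiff_pd (m := 0) hFc (by norm_num) k).continuous).integrableOn_Icc
  have hintP : ∀ j : Fin 3, IntegrableOn (fun x => pd j (P j) x)
      (Set.Icc (0 : Fin 3 → ℝ) (fun _ => 2 * Real.pi)) :=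
    fun j => ((contDiff_pd (m := 0) (hPc j) (by norm_num) j).continuous).integrableOn_Icc
  have hintPsum : IntegrableOn (fun x => ∑ j : Fin 3, pd j (P j) x)
      (Set.Icc (0 : Fin 3 → ℝ) (fun _ => 2 * Real.pi)) :=
    integrable_finset_sum _ (fun j _ => hintP j)
  have hintC : IntegrableOn (fun x => pd k F x - ∑ j : Fin 3, pd j (P j) x)
      (Set.Icc (0 : Fin 3 → ℝ) (fun _ => 2 * Real.pi)) := hintF.sub hintPsum
  simp only [key]
  rw [integral_add hintS2 hintC, integral_sub hintF hintPsum,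
    integral_pd_eq_zero hFc hFper k, integral_finset_sum _ (fun j _ => hintP j)]
  have hPzero : ∀ j : Fin 3, ∫ x in Set.Icc (0 : Fin 3 → ℝ) (fun _ => 2 * Real.pi),
      pd j (P j) x = 0 := fun j => integral_pd_eq_zero (hPc j) (hPper j) j
  simp [hPzero]
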